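/- In the random graph model RG(V,Ψ) with all agents stubborn with stubbornness θ ∈ (0,1), let δ = min_i Σ_j ψ_{ij} be the minimum expected degree and M = (θ/(1-θ))D + D - A. Then P(‖M^{-1}‖ ≤ 2(1-θ)/(θδ)) > 1 - n e^{-δ/8}, where ‖·‖ is the operator 2-norm (in particular M is invertible on this event). -/

import Mathlib

open Matrix MeasureTheory ProbabilityTheory

/-- In the random graph model `RG(V,Ψ)` with all agents stubborn with
stubbornness `θ ∈ (0,1)` and `M = (θ/(1-θ))D + D - A`, with probability greater than
`1 - n e^{-δ/8}` the matrix `M` is invertible with `‖M⁻¹‖ ≤ 2(1-θ)/(θδ)`, where `δ` is the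
minimum expected degree. -/
lemma stmt18_pairs {n : ℕ} (i : Fin n) (g : Fin n → Fin n → ℝ)
    (hsym : ∀ u v, g u v = g v u) (hdiag : ∀ u, g u u = 0) :
    ∑ p ∈ Finset.univ.filter
        (fun p : {p : Fin n × Fin n // p.1 < p.2} => p.1.1 = i ∨ p.1.2 = i),
      g p.1.1 p.1.2 = ∑ j, g i j := by
  classical
  have hR : ∑ j, g i j = ∑ j ∈ Finset.univ.erase i, g i j := by
    rw [← Finset.sum_erase_add _ _ (Finset.mem_univ i), hdiag, add_zero]
  rw [hR]
  refine Finset.sum_bij' (fun p _ => if p.1.1 = i then p.1.2 else p.1.1)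
    (fun j hj => ⟨if h : i < j then (i, j) else (j, i), ?_⟩) ?_ ?_ ?_ ?_ ?_
  · rcases lt_or_gt_of_ne (Finset.ne_of_mem_erase hj) with h1 | h1
    · simp [not_lt.mpr h1.le, h1]
    · simp [h1]
  · rintro ⟨⟨u, v⟩, huv⟩ hp
    simp only [Finset.mem_filter, Finset.mem_univ, true_and] at hp
    simp only [Finset.mem_erase, Finset.mem_univ, and_true]
    rcases hp with h | h
    · simp only [h, if_pos rfl]
      exact fun hc => absurd (hc ▸ h ▸ huv) (lt_irrefl _)
    · have hu : (u : Fin n) ≠ i := by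
        intro hc; exact absurd (hc ▸ h ▸ huv) (lt_irrefl _)
      simpa only [if_neg hu] using hu
  · intro j hj
    simp only [Finset.mem_filter, Finset.mem_univ, true_and]
    split <;> simp
  · rintro ⟨⟨u, v⟩, huv⟩ hp
    simp only [Finset.mem_filter, Finset.mem_univ, true_and] at hp
    rcases hp with h | h
    · have hiv : i < v := h ▸ huv
      simp [h, hiv]
    · have hui : u < i := h ▸ huv
      have hu : (u : Fin n) ≠ i := ne_of_lt hui
      simp [h, if_neg hu, not_lt.mpr hui.le]
  · intro j hj
    rcases lt_or_gt_of_ne (Finset.ne_of_mem_erase hj) with h1 | h1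
    · simp [not_lt.mpr h1.le, (Finset.ne_of_mem_erase hj)]
    · simp [h1]
  · rintro ⟨⟨u, v⟩, huv⟩ hp
    simp only [Finset.mem_filter, Finset.mem_univ, true_and] at hp
    rcases hp with h | h
    · simp [h]
    · have hui : u < i := h ▸ huv
      have hu : (u : Fin n) ≠ i := ne_of_lt hui
      simp [if_neg hu, h, hsym u i]
lemma stmt18_quad {n : ℕ} (b : Matrix (Fin n) (Fin n) ℝ)
    (hsym : ∀ i j, b i j = b j i) (hnn : ∀ i j, 0 ≤ b i j)
    (c α : ℝ) (hc : 0 < c) (hα : 0 < α)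
    (hdeg : ∀ i, α ≤ ∑ j, b i j) (x : Fin n → ℝ) :
    c * α * (∑ i, x i * x i) ≤
      x ⬝ᵥ (c • Matrix.diagonal (fun i => ∑ j, b i j) +
        Matrix.diagonal (fun i => ∑ j, b i j) - b) *ᵥ x := by
  set d : Fin n → ℝ := fun i => ∑ j, b i j with hd
  set Mm : Matrix (Fin n) (Fin n) ℝ := c • Matrix.diagonal d + Matrix.diagonal d - b with hMm
  have hMx : ∀ i, (Mm *ᵥ x) i = c * (d i * x i) + d i * x i - ∑ j, b i j * x j := by
    intro i
    simp [hMm, Matrix.add_mulVec, Matrix.sub_mulVec, Matrix.smul_mulVec,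
      Matrix.mulVec_diagonal, Matrix.mulVec, dotProduct, sub_mul, add_mul,
      Finset.sum_sub_distrib, Finset.sum_add_distrib, Matrix.diagonal_apply, ite_mul,
      Finset.sum_ite_eq, mul_assoc]
  have hmul : ∀ i, (∑ j, b i j * (x i * x j)) = x i * ∑ j, b i j * x j := by
    intro i
    rw [Finset.mul_sum]
    exact Finset.sum_congr rfl fun j _ => by ring
  have e1 : x ⬝ᵥ Mm *ᵥ x = c * (∑ i, d i * (x i * x i)) +
      ((∑ i, d i * (x i * x i)) - ∑ i, ∑ j, b i j * (x i * x j)) := by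
    simp only [dotProduct, hMx]
    have : ∀ i : Fin n, x i * (c * (d i * x i) + d i * x i - ∑ j, b i j * x j)
        = c * (d i * (x i * x i)) + d i * (x i * x i) - ∑ j, b i j * (x i * x j) := by
      intro i
      rw [hmul]
      ring
    rw [Finset.sum_congr rfl fun i _ => this i, Finset.sum_sub_distrib,
      Finset.sum_add_distrib, Finset.mul_sum]
    ring
  -- Laplacian quadratic form nonneg
  have hrow : ∀ i, (∑ j, b i j * (x i * x i)) = d i * (x i * x i) := by
    intro i
    rw [← Finset.sum_mul]
  have hswap : (∑ i, ∑ j, b i j * (x j * x j)) = ∑ i, d i * (x i * x i) := by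
    rw [Finset.sum_comm]
    refine Finset.sum_congr rfl fun j _ => ?_
    rw [← Finset.sum_mul]
    congr 1
    exact Finset.sum_congr rfl fun i _ => hsym i j
  have hexpand : (∑ i, ∑ j, b i j * ((x i - x j) ^ 2)) =
      2 * ((∑ i, d i * (x i * x i)) - ∑ i, ∑ j, b i j * (x i * x j)) := by
    have : ∀ i : Fin n, (∑ j, b i j * ((x i - x j) ^ 2)) =
        (∑ j, b i j * (x i * x i)) + (∑ j, b i j * (x j * x j))
          - 2 * ∑ j, b i j * (x i * x j) := by
      intro i
      rw [Finset.mul_sum, ← Finset.sum_add_distrib, ← Finset.sum_sub_distrib]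
      exact Finset.sum_congr rfl fun j _ => by ring
    rw [Finset.sum_congr rfl fun i _ => this i, Finset.sum_sub_distrib,
      Finset.sum_add_distrib, hswap]
    simp only [hrow]
    rw [← Finset.mul_sum]
    ring
  have hQ : 0 ≤ ∑ i, ∑ j, b i j * ((x i - x j) ^ 2) := by
    refine Finset.sum_nonneg fun i _ => Finset.sum_nonneg fun j _ => ?_
    exact mul_nonneg (hnn i j) (sq_nonneg _)
  have hA : α * (∑ i, x i * x i) ≤ ∑ i, d i * (x i * x i) := by
    rw [Finset.mul_sum]
    refine Finset.sum_le_sum fun i _ => ?_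
    exact mul_le_mul_of_nonneg_right (hdeg i) (mul_self_nonneg _)
  rw [e1]
  nlinarith [mul_le_mul_of_nonneg_left hA hc.le]

lemma stmt18_det {n : ℕ} (b : Matrix (Fin n) (Fin n) ℝ)
    (hsym : ∀ i j, b i j = b j i) (hnn : ∀ i j, 0 ≤ b i j)
    (c α : ℝ) (hc : 0 < c) (hα : 0 < α)
    (hdeg : ∀ i, α ≤ ∑ j, b i j) :
    IsUnit (c • Matrix.diagonal (fun i => ∑ j, b i j) +
        Matrix.diagonal (fun i => ∑ j, b i j) - b) ∧
      ‖Matrix.toEuclideanCLM (𝕜 := ℝ) (c • Matrix.diagonal (fun i => ∑ j, b i j) +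
        Matrix.diagonal (fun i => ∑ j, b i j) - b)⁻¹‖ ≤ 1 / (c * α) := by
  set d : Fin n → ℝ := fun i => ∑ j, b i j with hd
  set Mm : Matrix (Fin n) (Fin n) ℝ := c • Matrix.diagonal d + Matrix.diagonal d - b with hMm
  have quad := stmt18_quad b hsym hnn c α hc hα hdeg
  have herm : Mm.IsHermitian := by
    show Mmᴴ = Mm
    ext i j
    simp only [hMm, conjTranspose_apply, Matrix.sub_apply, Matrix.add_apply, Matrix.smul_apply,
      Matrix.diagonal_apply, smul_eq_mul, star_trivial]
    rcases eq_or_ne i j with rfl | hij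
    · simp
    · simp [hij, Ne.symm hij, hsym j i]
  have hposdef : Mm.PosDef := by
    refine posDef_iff_dotProduct_mulVec.mpr ⟨herm, fun x hx => ?_⟩
    have hS : 0 < ∑ i, x i * x i := by
      obtain ⟨i, hi⟩ := Function.ne_iff.mp hx
      exact Finset.sum_pos' (fun j _ => mul_self_nonneg _)
        ⟨i, Finset.mem_univ i, mul_self_pos.mpr hi⟩
    have := quad x
    have hstar : star x = x := by
      funext i; exact star_trivial _
    rw [hstar]
    calc (0:ℝ) < c * α * (∑ i, x i * x i) := by positivity
    _ ≤ x ⬝ᵥ Mm *ᵥ x := this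
  have hunit : IsUnit Mm := hposdef.isUnit
  refine ⟨hunit, ?_⟩
  have hdet : IsUnit Mm.det := (Matrix.isUnit_iff_isUnit_det _).mp hunit
  refine ContinuousLinearMap.opNorm_le_bound _ (by positivity) fun x => ?_
  set v : Fin n → ℝ := WithLp.equiv 2 _ x with hv
  set y : Fin n → ℝ := Mm⁻¹ *ᵥ v with hy
  set Y : EuclideanSpace ℝ (Fin n) := (WithLp.equiv 2 _).symm y with hY
  have hTx : Matrix.toEuclideanCLM (𝕜 := ℝ) Mm⁻¹ x = Y := by
    rw [show x = (WithLp.equiv 2 _).symm v from ((WithLp.equiv 2 _).symm_apply_apply x).symm,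
      ]
    rfl
  have hMy : Mm *ᵥ y = v := by
    rw [hy, Matrix.mulVec_mulVec, Matrix.mul_nonsing_inv _ hdet, Matrix.one_mulVec]
  have hquad := quad y
  rw [hMy] at hquad
  have hYnorm : (∑ i, y i * y i) = ‖Y‖ * ‖Y‖ := by
    rw [← real_inner_self_eq_norm_mul_norm]
    simp [hY, PiLp.inner_apply, RCLike.inner_apply]
    rw [EuclideanSpace.norm_sq_eq]
    simp [sq]
  have hdot : y ⬝ᵥ v = inner ℝ Y x := by
    simp [dotProduct, hY, PiLp.inner_apply, RCLike.inner_apply, hv]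
    exact Finset.sum_congr rfl fun _ _ => mul_comm _ _
  have hCS : y ⬝ᵥ v ≤ ‖Y‖ * ‖x‖ := by
    rw [hdot]; exact real_inner_le_norm Y x
  have hkey : c * α * (‖Y‖ * ‖Y‖) ≤ ‖Y‖ * ‖x‖ := by
    rw [← hYnorm]; exact le_trans hquad hCS
  rw [hTx]
  rcases eq_or_lt_of_le (norm_nonneg Y) with hY0 | hY0
  · rw [← hY0]; positivity
  · have h1 : c * α * ‖Y‖ ≤ ‖x‖ := by nlinarith
    rw [div_mul_eq_mul_div, le_div_iff₀ (mul_pos hc hα)]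
    nlinarith

lemma stmt18_chernoff {Ω : Type*} [MeasurableSpace Ω] (μ : Measure Ω) [IsProbabilityMeasure μ]
    {n : ℕ} (ψ : Fin n → Fin n → ℝ)
    (hψsymm : ∀ i j, ψ i j = ψ j i) (hψdiag : ∀ i, ψ i i = 0)
    (hψmem : ∀ i j, ψ i j ∈ Set.Icc (0:ℝ) 1)
    (a : Fin n → Fin n → Ω → ℝ)
    (hmeas : ∀ i j, Measurable (a i j))
    (hval : ∀ i j ω, a i j ω = 0 ∨ a i j ω = 1)
    (hasymm : ∀ i j ω, a i j ω = a j i ω) (hadiag : ∀ i ω, a i i ω = 0)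
    (hprob : ∀ i j, i ≠ j → μ {ω | a i j ω = 1} = ENNReal.ofReal (ψ i j))
    (hind : iIndepFun
      (fun (p : {p : Fin n × Fin n // p.1 < p.2}) ω => a p.1.1 p.1.2 ω) μ)
    (δ : ℝ) (hδpos : 0 < δ) (i : Fin n) (hδle : δ ≤ ∑ j, ψ i j) :
    (μ {ω | (∑ j, a i j ω) ≤ δ / 2}).toReal < Real.exp (-δ / 8) := by
  classical
  set t : ℝ := -Real.log 2 with ht
  have ht0 : t ≤ 0 := neg_nonpos.mpr (Real.log_nonneg one_le_two)
  have hexpt : Real.exp t = 1 / 2 := by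
    rw [ht, Real.exp_neg, Real.exp_log two_pos]
    norm_num
  set X : Ω → ℝ := fun ω => ∑ j, a i j ω with hX
  have hXmeas : Measurable X := by
    apply Finset.measurable_sum
    exact fun j _ => hmeas i j
  have ha01 : ∀ u v ω, 0 ≤ a u v ω ∧ a u v ω ≤ 1 := by
    intro u v ω; rcases hval u v ω with h | h <;> simp [h]
  have hXnn : ∀ ω, 0 ≤ X ω := fun ω => Finset.sum_nonneg fun j _ => (ha01 i j ω).1
  have hint : Integrable (fun ω => Real.exp (t * X ω)) μ := by
    refine Integrable.mono' (integrable_const 1)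
      ((hXmeas.const_mul t).exp).aestronglyMeasurable ?_
    filter_upwards with ω
    rw [Real.norm_eq_abs, abs_of_pos (Real.exp_pos _)]
    exact Real.exp_le_one_iff.mpr (mul_nonpos_of_nonpos_of_nonneg ht0 (hXnn ω))
  have hcher := measure_le_le_exp_mul_mgf (X := X) (μ := μ) (t := t) (δ / 2) ht0 hint
  -- rewrite X as a sum over the independent pair family
  set S : Finset {p : Fin n × Fin n // p.1 < p.2} := Finset.univ.filter
      (fun p : {p : Fin n × Fin n // p.1 < p.2} => p.1.1 = i ∨ p.1.2 = i) with hS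
  have hXeq : X = ∑ p ∈ S, (fun ω => a p.1.1 p.1.2 ω) := by
    funext ω
    rw [Finset.sum_apply]
    exact (stmt18_pairs i (fun u v => a u v ω) (fun u v => hasymm u v ω)
      (fun u => hadiag u ω)).symm
  have hmgf : mgf X μ t = ∏ p ∈ S, mgf (fun ω => a p.1.1 p.1.2 ω) μ t := by
    rw [hXeq]
    exact hind.mgf_sum (fun p => hmeas _ _) S
  -- compute per-pair mgf
  have hIa : ∀ u v : Fin n, Integrable (a u v) μ := by
    intro u v
    refine Integrable.mono' (integrable_const 1) (hmeas u v).aestronglyMeasurable ?_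
    filter_upwards with ω
    rw [Real.norm_eq_abs, abs_of_nonneg (ha01 u v ω).1]
    exact (ha01 u v ω).2
  have hEa : ∀ u v : Fin n, u ≠ v → ∫ ω, a u v ω ∂μ = ψ u v := by
    intro u v huv
    have hset : MeasurableSet {ω | a u v ω = 1} := (hmeas u v) (measurableSet_singleton 1)
    have haind : a u v = Set.indicator {ω | a u v ω = 1} (fun _ => (1:ℝ)) := by
      funext ω
      rcases hval u v ω with h | h
      · have hnm : ω ∉ {ω | a u v ω = 1} := by simp [Set.mem_setOf_eq, h]
        rw [Set.indicator_of_notMem hnm, h]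
      · have hm : ω ∈ {ω | a u v ω = 1} := h
        rw [Set.indicator_of_mem hm, h]
    rw [haind, integral_indicator_const _ hset, measureReal_def, hprob u v huv, smul_eq_mul, mul_one,
      ENNReal.toReal_ofReal (hψmem u v).1]
  have hmgfp : ∀ u v : Fin n, u ≠ v →
      mgf (a u v) μ t = 1 + (Real.exp t - 1) * ψ u v := by
    intro u v huv
    have hptw : ∀ ω, Real.exp (t * a u v ω) = 1 + (Real.exp t - 1) * a u v ω := by
      intro ω
      rcases hval u v ω with h | h
      · simp [h]
      · rw [h, mul_one, mul_one]; ring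
    unfold mgf
    rw [integral_congr_ae (ae_of_all _ hptw), integral_add (integrable_const 1)
      ((hIa u v).const_mul _), integral_const, integral_const_mul, hEa u v huv]
    simp
  -- bound the product
  have hprod : mgf X μ t ≤ Real.exp (-(1/2) * ∑ p ∈ S, ψ p.1.1 p.1.2) := by
    rw [hmgf]
    calc ∏ p ∈ S, mgf (fun ω => a p.1.1 p.1.2 ω) μ t
        = ∏ p ∈ S, (1 + (Real.exp t - 1) * ψ p.1.1 p.1.2) := by
          refine Finset.prod_congr rfl fun p _ => hmgfp p.1.1 p.1.2 (ne_of_lt p.2)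
      _ ≤ ∏ p ∈ S, Real.exp ((Real.exp t - 1) * ψ p.1.1 p.1.2) := by
          refine Finset.prod_le_prod (fun p _ => ?_) (fun p _ => ?_)
          · rw [hexpt]
            have := (hψmem p.1.1 p.1.2).2
            nlinarith
          · rw [add_comm]
            exact Real.add_one_le_exp _
      _ = Real.exp (∑ p ∈ S, (Real.exp t - 1) * ψ p.1.1 p.1.2) := (Real.exp_sum _ _).symm
      _ = Real.exp (-(1/2) * ∑ p ∈ S, ψ p.1.1 p.1.2) := by
          rw [← Finset.mul_sum, hexpt]
          norm_num
  have hsumψ : ∑ p ∈ S, ψ p.1.1 p.1.2 = ∑ j, ψ i j := stmt18_pairs i ψ hψsymm hψdiag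
  have hbound : (μ {ω | X ω ≤ δ / 2}).toReal ≤
      Real.exp (-t * (δ / 2)) * Real.exp (-(1/2) * δ) := by
    refine hcher.trans ?_
    have h1 : Real.exp (-(1/2) * ∑ p ∈ S, ψ p.1.1 p.1.2) ≤ Real.exp (-(1/2) * δ) := by
      apply Real.exp_le_exp.mpr
      rw [hsumψ]
      nlinarith
    have h2 : (0:ℝ) ≤ Real.exp (-t * (δ / 2)) := (Real.exp_pos _).le
    exact mul_le_mul_of_nonneg_left (hprod.trans h1) h2
  refine lt_of_le_of_lt hbound ?_
  rw [← Real.exp_add, Real.exp_lt_exp]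
  have hlog : Real.log 2 < 0.6931471808 := Real.log_two_lt_d9
  rw [ht]
  nlinarith

theorem stmt_18 {Ω : Type*} [MeasurableSpace Ω] (μ : Measure Ω) [IsProbabilityMeasure μ]
    (n : ℕ) (hn : 0 < n) (ψ : Fin n → Fin n → ℝ)
    (hψsymm : ∀ i j, ψ i j = ψ j i) (hψdiag : ∀ i, ψ i i = 0)
    (hψmem : ∀ i j, ψ i j ∈ Set.Icc (0:ℝ) 1)
    (a : Fin n → Fin n → Ω → ℝ)
    (hmeas : ∀ i j, Measurable (a i j))
    (hval : ∀ i j ω, a i j ω = 0 ∨ a i j ω = 1)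
    (hasymm : ∀ i j ω, a i j ω = a j i ω) (hadiag : ∀ i ω, a i i ω = 0)
    (hprob : ∀ i j, i ≠ j → μ {ω | a i j ω = 1} = ENNReal.ofReal (ψ i j))
    (hind : iIndepFun
      (fun (p : {p : Fin n × Fin n // p.1 < p.2}) ω => a p.1.1 p.1.2 ω) μ)
    (θ : ℝ) (hθ : θ ∈ Set.Ioo (0:ℝ) 1)
    (δ : ℝ) (hδ : δ = Finset.univ.inf' ⟨⟨0, hn⟩, Finset.mem_univ _⟩ fun i => ∑ j, ψ i j)
    (hδpos : 0 < δ)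
    (M : Ω → Matrix (Fin n) (Fin n) ℝ)
    (hM : ∀ ω, M ω = (θ / (1 - θ)) • Matrix.diagonal (fun i => ∑ j, a i j ω) +
      Matrix.diagonal (fun i => ∑ j, a i j ω) - Matrix.of (fun i j => a i j ω)) :
    1 - (n : ℝ) * Real.exp (-δ / 8) <
      (μ {ω | IsUnit (M ω) ∧
        ‖Matrix.toEuclideanCLM (𝕜 := ℝ) (M ω)⁻¹‖ ≤ 2 * (1 - θ) / (θ * δ)}).toReal := by
  classical
  obtain ⟨hθ0, hθ1⟩ := hθ
  have hθ1' : 0 < 1 - θ := by linarith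
  set c : ℝ := θ / (1 - θ) with hc
  have hcpos : 0 < c := div_pos hθ0 hθ1'
  set G : Set Ω := {ω | ∀ i, δ / 2 < ∑ j, a i j ω} with hG
  have hGmeas : MeasurableSet G := by
    have : G = ⋂ i, {ω | δ / 2 < ∑ j, a i j ω} := by
      ext ω; simp [hG, Set.mem_iInter]
    rw [this]
    refine MeasurableSet.iInter fun i => ?_
    exact measurableSet_lt measurable_const (Finset.measurable_sum _ fun j _ => hmeas i j)
  -- good event is contained in the target event
  have hsub : G ⊆ {ω | IsUnit (M ω) ∧
      ‖Matrix.toEuclideanCLM (𝕜 := ℝ) (M ω)⁻¹‖ ≤ 2 * (1 - θ) / (θ * δ)} := by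
    intro ω hω
    have hω' : ∀ i, δ / 2 ≤ ∑ j, a i j ω := fun i => (hω i).le
    have hdet := stmt18_det (Matrix.of (fun i j => a i j ω))
      (fun i j => hasymm i j ω)
      (fun i j => by rcases hval i j ω with h | h <;> simp [Matrix.of_apply, h])
      c (δ / 2) hcpos (by linarith) (fun i => hω' i)
    have hMeq : M ω = c • Matrix.diagonal (fun i => ∑ j, (Matrix.of (fun i j => a i j ω)) i j) +
        Matrix.diagonal (fun i => ∑ j, (Matrix.of (fun i j => a i j ω)) i j) -
        Matrix.of (fun i j => a i j ω) := by
      rw [hM ω]; rfl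
    have hbd : 1 / (c * (δ / 2)) = 2 * (1 - θ) / (θ * δ) := by
      rw [hc]
      field_simp
    refine ⟨by rw [hMeq]; exact hdet.1, ?_⟩
    rw [hMeq, ← hbd]
    exact hdet.2
  -- complement bound
  have hcompl : Gᶜ = ⋃ i, {ω | (∑ j, a i j ω) ≤ δ / 2} := by
    ext ω
    simp [hG, Set.mem_iUnion, not_forall, not_lt]
  have hUn : μ Gᶜ ≤ ∑ i, μ {ω | (∑ j, a i j ω) ≤ δ / 2} := by
    rw [hcompl]
    exact measure_iUnion_fintype_le μ _
  have hfin : ∀ i : Fin n, μ {ω | (∑ j, a i j ω) ≤ δ / 2} ≠ ⊤ := fun i => measure_ne_top μ _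
  have hUn' : (μ Gᶜ).toReal ≤ ∑ i, (μ {ω | (∑ j, a i j ω) ≤ δ / 2}).toReal := by
    rw [← ENNReal.toReal_sum (fun i _ => hfin i)]
    exact ENNReal.toReal_mono (by simp [ENNReal.sum_lt_top, (hfin _).lt_top]) hUn
  have hδle : ∀ i : Fin n, δ ≤ ∑ j, ψ i j := by
    intro i
    rw [hδ]
    exact Finset.inf'_le _ (Finset.mem_univ i)
  have hcher : ∀ i : Fin n, (μ {ω | (∑ j, a i j ω) ≤ δ / 2}).toReal < Real.exp (-δ / 8) :=
    fun i => stmt18_chernoff μ ψ hψsymm hψdiag hψmem a hmeas hval hasymm hadiag hprob hind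
      δ hδpos i (hδle i)
  have hsum : ∑ i : Fin n, (μ {ω | (∑ j, a i j ω) ≤ δ / 2}).toReal <
      (n : ℝ) * Real.exp (-δ / 8) := by
    calc ∑ i : Fin n, (μ {ω | (∑ j, a i j ω) ≤ δ / 2}).toReal
        < ∑ _i : Fin n, Real.exp (-δ / 8) := by
          refine Finset.sum_lt_sum_of_nonempty ?_ fun i _ => hcher i
          exact Finset.univ_nonempty_iff.mpr ⟨⟨0, hn⟩⟩
      _ = (n : ℝ) * Real.exp (-δ / 8) := by simp [mul_comm]
  have hGc : (μ Gᶜ).toReal < (n : ℝ) * Real.exp (-δ / 8) := lt_of_le_of_lt hUn' hsum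
  have hadd : (μ G).toReal + (μ Gᶜ).toReal = 1 := by
    rw [← ENNReal.toReal_add (measure_ne_top μ _) (measure_ne_top μ _),
      measure_add_measure_compl hGmeas, measure_univ, ENNReal.toReal_one]
  have hmono : (μ G).toReal ≤ (μ {ω | IsUnit (M ω) ∧
      ‖Matrix.toEuclideanCLM (𝕜 := ℝ) (M ω)⁻¹‖ ≤ 2 * (1 - θ) / (θ * δ)}).toReal :=
    ENNReal.toReal_mono (measure_ne_top μ _) (measure_mono hsub)
  linarith
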